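/- There exists a unique formal power series S(z) = -z + O(z^2) with S(z) ≠ z satisfying (1+z)·e^{-z} = (1+S(z))·e^{-S(z)}, and its initial coefficients are S(z) = -z + (2/3)z^2 - (4/9)z^3 + (44/135)z^4 + O(z^5). -/

import Mathlib

open PowerSeries Finset

/-- Composition `f(g(X))` of formal power series (valid when `g` has zero constant term). -/
noncomputable def psComp (f g : PowerSeries ℚ) : PowerSeries ℚ :=
  PowerSeries.mk fun n =>
    ∑ k ∈ Finset.range (n + 1), PowerSeries.coeff k f * PowerSeries.coeff n (g ^ k)

/-- The formal power series of `e^{-z}`. -/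
noncomputable def expNeg : PowerSeries ℚ :=
  PowerSeries.mk fun n => (-1) ^ n / Nat.factorial n

noncomputable def gSer : PowerSeries ℚ := (1 + PowerSeries.X) * expNeg

lemma coeff_expNeg (n : ℕ) : PowerSeries.coeff n expNeg = (-1) ^ n / n.factorial := by
  simp [expNeg]

lemma coeff_gSer_zero : PowerSeries.coeff 0 gSer = 1 := by
  simp [gSer, coeff_zero_eq_constantCoeff, expNeg]

lemma coeff_gSer_succ (n : ℕ) :
    PowerSeries.coeff (n + 1) gSer = (-1) ^ (n + 1) / (n + 1).factorial + (-1) ^ n / n.factorial := by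
  rw [gSer, add_mul, one_mul, map_add, coeff_succ_X_mul, coeff_expNeg, coeff_expNeg]

lemma gSer1 : PowerSeries.coeff 1 gSer = 0 := by
  rw [show (1:ℕ) = 0 + 1 from rfl, coeff_gSer_succ]; norm_num
lemma gSer2 : PowerSeries.coeff 2 gSer = -1/2 := by
  rw [show (2:ℕ) = 1 + 1 from rfl, coeff_gSer_succ]; norm_num [Nat.factorial]
lemma gSer3 : PowerSeries.coeff 3 gSer = 1/3 := by
  rw [show (3:ℕ) = 2 + 1 from rfl, coeff_gSer_succ]; norm_num [Nat.factorial]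
lemma gSer4 : PowerSeries.coeff 4 gSer = -1/8 := by
  rw [show (4:ℕ) = 3 + 1 from rfl, coeff_gSer_succ]; norm_num [Nat.factorial]
lemma gSer5 : PowerSeries.coeff 5 gSer = 1/30 := by
  rw [show (5:ℕ) = 4 + 1 from rfl, coeff_gSer_succ]; norm_num [Nat.factorial]

lemma coeff_pow_eq_zero {S : PowerSeries ℚ} (hS : PowerSeries.constantCoeff S = 0)
    {k j : ℕ} (h : j < k) : PowerSeries.coeff j (S ^ k) = 0 := by
  have hd : (PowerSeries.X : PowerSeries ℚ) ^ k ∣ S ^ k :=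
    pow_dvd_pow_of_dvd (PowerSeries.X_dvd_iff.mpr hS) k
  exact (PowerSeries.X_pow_dvd_iff.mp hd) j h

lemma coeff_pow_congr {S T : PowerSeries ℚ} (hS : PowerSeries.constantCoeff S = 0)
    (hT : PowerSeries.constantCoeff T = 0) {N : ℕ}
    (h : ∀ i ≤ N, PowerSeries.coeff i S = PowerSeries.coeff i T) :
    ∀ k m, 1 ≤ k → m + 1 ≤ N + k →
      PowerSeries.coeff m (S ^ k) = PowerSeries.coeff m (T ^ k) := by
  intro k
  induction k with
  | zero => intro m h1 _; omega
  | succ k ih =>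
    intro m _ hm
    rcases Nat.eq_zero_or_pos k with rfl | hk
    · simpa using h m (by omega)
    · rw [pow_succ, pow_succ, PowerSeries.coeff_mul, PowerSeries.coeff_mul]
      apply Finset.sum_congr rfl
      intro p hp
      rw [Finset.HasAntidiagonal.mem_antidiagonal] at hp
      rcases lt_or_ge p.1 k with h1 | h1
      · rw [coeff_pow_eq_zero hS h1, coeff_pow_eq_zero hT h1, zero_mul, zero_mul]
      · rcases Nat.eq_zero_or_pos p.2 with h2 | h2
        · rw [h2]
          simp [PowerSeries.coeff_zero_eq_constantCoeff, hS, hT]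
        · rw [h p.2 (by omega), ih p.1 hk (by omega)]
lemma psComp_add (f h S : PowerSeries ℚ) : psComp (f + h) S = psComp f S + psComp h S := by
  ext m
  simp [psComp, add_mul, Finset.sum_add_distrib]

lemma mul_psComp {S : PowerSeries ℚ} (hS : PowerSeries.constantCoeff S = 0)
    (f : PowerSeries ℚ) : S * psComp f S = psComp (PowerSeries.X * f) S := by
  ext m
  rw [PowerSeries.coeff_mul]
  simp only [psComp, PowerSeries.coeff_mk]
  have step1 : ∀ p ∈ antidiagonal m,
      PowerSeries.coeff p.1 S *
          ∑ k ∈ Finset.range (p.2 + 1), PowerSeries.coeff k f * PowerSeries.coeff p.2 (S ^ k) =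
        PowerSeries.coeff p.1 S *
          ∑ k ∈ Finset.range (m + 1), PowerSeries.coeff k f * PowerSeries.coeff p.2 (S ^ k) := by
    intro p hp
    rw [Finset.HasAntidiagonal.mem_antidiagonal] at hp
    congr 1
    apply Finset.sum_subset
    · intro x hx
      rw [Finset.mem_range] at hx ⊢
      omega
    · intro x _ hx
      rw [Finset.mem_range, not_lt] at hx
      rw [coeff_pow_eq_zero hS (by omega), mul_zero]
  rw [Finset.sum_congr rfl step1]
  have step2 : ∑ p ∈ antidiagonal m, PowerSeries.coeff p.1 S *
        ∑ k ∈ Finset.range (m + 1), PowerSeries.coeff k f * PowerSeries.coeff p.2 (S ^ k) =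
      ∑ k ∈ Finset.range (m + 1), PowerSeries.coeff k f * PowerSeries.coeff m (S ^ (k + 1)) := by
    simp_rw [Finset.mul_sum]
    rw [Finset.sum_comm]
    apply Finset.sum_congr rfl
    intro k _
    rw [pow_succ', PowerSeries.coeff_mul, Finset.mul_sum]
    apply Finset.sum_congr rfl
    intro p _
    ring
  rw [step2]
  conv_lhs => rw [Finset.sum_range_succ]
  conv_rhs => rw [Finset.sum_range_succ']
  have h0 : PowerSeries.coeff 0 (PowerSeries.X * f) = 0 := by
    simp [PowerSeries.coeff_zero_eq_constantCoeff]
  have hm1 : PowerSeries.coeff m (S ^ (m + 1)) = 0 := coeff_pow_eq_zero hS (by omega)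
  rw [hm1, h0]
  simp only [PowerSeries.coeff_succ_X_mul, mul_zero, zero_mul, add_zero]

lemma one_add_mul_psComp {S : PowerSeries ℚ} (hS : PowerSeries.constantCoeff S = 0)
    (f : PowerSeries ℚ) :
    (1 + S) * psComp f S = psComp ((1 + PowerSeries.X) * f) S := by
  rw [add_mul, one_mul, add_mul, one_mul, psComp_add, mul_psComp hS]

lemma lemA {S T : PowerSeries ℚ} (hS0 : PowerSeries.constantCoeff S = 0)
    (hT0 : PowerSeries.constantCoeff T = 0) {n : ℕ} (hn : 2 ≤ n)
    (hagree : ∀ i < n, PowerSeries.coeff i S = PowerSeries.coeff i T)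
    (hS1 : PowerSeries.coeff 1 S = -1) :
    PowerSeries.coeff (n + 1) (psComp gSer S) - PowerSeries.coeff (n + 1) (psComp gSer T) =
      PowerSeries.coeff n S - PowerSeries.coeff n T := by
  have hT1 : PowerSeries.coeff 1 T = -1 := by rw [← hagree 1 (by omega)]; exact hS1
  simp only [psComp, PowerSeries.coeff_mk]
  rw [← Finset.sum_sub_distrib]
  rw [Finset.sum_eq_single 2]
  · have h2 : PowerSeries.coeff (n + 1) (S ^ 2) - PowerSeries.coeff (n + 1) (T ^ 2) =
        -2 * (PowerSeries.coeff n S - PowerSeries.coeff n T) := by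
      rw [pow_two, pow_two, PowerSeries.coeff_mul, PowerSeries.coeff_mul,
        Finset.Nat.sum_antidiagonal_eq_sum_range_succ_mk,
        Finset.Nat.sum_antidiagonal_eq_sum_range_succ_mk, ← Finset.sum_sub_distrib]
      have pointwise : ∀ i ∈ Finset.range (n + 2),
          (PowerSeries.coeff i S * PowerSeries.coeff (n + 1 - i) S -
            PowerSeries.coeff i T * PowerSeries.coeff (n + 1 - i) T) =
          (if i = 1 then -(PowerSeries.coeff n S - PowerSeries.coeff n T) else 0) +
            (if i = n then -(PowerSeries.coeff n S - PowerSeries.coeff n T) else 0) := by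
        intro i hi
        rw [Finset.mem_range] at hi
        by_cases h1 : i = 1
        · subst h1
          rw [if_pos rfl, if_neg (by omega), add_zero]
          have : n + 1 - 1 = n := by omega
          rw [this, hS1, hT1]; ring
        by_cases h2 : i = n
        · rw [if_neg (by omega), if_pos h2, zero_add, h2]
          have : n + 1 - n = 1 := by omega
          rw [this, hS1, hT1]; ring
        rw [if_neg h1, if_neg h2, add_zero]
        rcases Nat.eq_zero_or_pos i with rfl | hpos
        · simp [PowerSeries.coeff_zero_eq_constantCoeff, hS0, hT0]
        rcases eq_or_lt_of_le (show i ≤ n + 1 by omega) with heq | hlt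
        · rw [heq, Nat.sub_self]
          simp only [PowerSeries.coeff_zero_eq_constantCoeff, hS0, hT0]
          ring
        · rw [hagree i (by omega), hagree (n + 1 - i) (by omega)]
          ring
      rw [Finset.sum_congr rfl pointwise, Finset.sum_add_distrib,
        Finset.sum_ite_eq' (Finset.range (n + 2)) 1,
        Finset.sum_ite_eq' (Finset.range (n + 2)) n,
        if_pos (by rw [Finset.mem_range]; omega), if_pos (by rw [Finset.mem_range]; omega)]
      ring
    rw [gSer2]
    rw [mul_comm, mul_comm (-1/2 : ℚ), ← sub_mul, h2]
    ring
  · intro k hk hk2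
    rw [Finset.mem_range] at hk
    match k, hk2 with
    | 0, _ =>
      simp [PowerSeries.coeff_one]
    | 1, _ =>
      rw [gSer1]; ring
    | (j+3), _ =>
      rw [coeff_pow_congr hS0 hT0 (N := n - 1)
        (fun i hi => hagree i (by omega)) (j + 3) (n + 1) (by omega) (by omega)]
      ring
  · intro h2
    exfalso
    exact h2 (by rw [Finset.mem_range]; omega)

noncomputable def aSeq : ℕ → ℚ
  | 0 => 0
  | 1 => -1
  | n + 2 =>
    PowerSeries.coeff (n + 3) gSer -
      PowerSeries.coeff (n + 3)
        (psComp gSer (PowerSeries.mk fun i => if _h : i < n + 2 then aSeq i else 0))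

noncomputable def S₀ : PowerSeries ℚ := PowerSeries.mk aSeq

lemma S₀_coeff (n : ℕ) : PowerSeries.coeff n S₀ = aSeq n := by simp [S₀]

lemma S₀_const : PowerSeries.constantCoeff S₀ = 0 := by
  rw [← PowerSeries.coeff_zero_eq_constantCoeff_apply, S₀_coeff]
  simp [aSeq]

lemma S₀_one : PowerSeries.coeff 1 S₀ = -1 := by
  rw [S₀_coeff]; simp [aSeq]

lemma psComp_gSer_S₀ : psComp gSer S₀ = gSer := by
  ext m
  match m with
  | 0 =>
    simp [psComp, coeff_gSer_zero, PowerSeries.coeff_zero_eq_constantCoeff]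
  | 1 =>
    simp only [psComp, PowerSeries.coeff_mk, Finset.sum_range_succ, Finset.sum_range_zero,
      zero_add, pow_zero, pow_one, PowerSeries.coeff_one, gSer1]
    norm_num
  | 2 =>
    simp only [psComp, PowerSeries.coeff_mk, Finset.sum_range_succ, Finset.sum_range_zero,
      zero_add, pow_zero, pow_one, PowerSeries.coeff_one]
    rw [coeff_gSer_zero, gSer1, gSer2, pow_two, PowerSeries.coeff_mul]
    rw [Finset.Nat.sum_antidiagonal_eq_sum_range_succ_mk]
    simp only [Finset.sum_range_succ, Finset.sum_range_zero, S₀_coeff]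
    have a0 : aSeq 0 = 0 := by simp [aSeq]
    have a1 : aSeq 1 = -1 := by simp [aSeq]
    norm_num [a0, a1]
  | (n + 3) =>
    set T : PowerSeries ℚ := PowerSeries.mk fun i => if _h : i < n + 2 then aSeq i else 0 with hT
    have hT0 : PowerSeries.constantCoeff T = 0 := by
      rw [← PowerSeries.coeff_zero_eq_constantCoeff_apply, hT]
      simp [aSeq]
    have hagree : ∀ i < n + 2, PowerSeries.coeff i S₀ = PowerSeries.coeff i T := by
      intro i hi
      rw [S₀_coeff, hT, PowerSeries.coeff_mk, dif_pos hi]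
    have hA := lemA S₀_const hT0 (n := n + 2) (by omega) hagree S₀_one
    have hTn : PowerSeries.coeff (n + 2) T = 0 := by
      rw [hT, PowerSeries.coeff_mk, dif_neg (by omega)]
    have ha : aSeq (n + 2) =
        PowerSeries.coeff (n + 3) gSer - PowerSeries.coeff (n + 3) (psComp gSer T) := by
      rw [hT]
      conv_lhs => rw [aSeq]
    rw [S₀_coeff, hTn, ha] at hA
    have : (n + 2) + 1 = n + 3 := by omega
    rw [this] at hA
    linarith

lemma extract2 {S : PowerSeries ℚ} (hS0 : PowerSeries.constantCoeff S = 0)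
    (hS1 : PowerSeries.coeff 1 S = -1) (hkey : psComp gSer S = gSer) :
    PowerSeries.coeff 2 S = 2 / 3 := by
  have h0 : PowerSeries.coeff 0 S = 0 := by
    rw [PowerSeries.coeff_zero_eq_constantCoeff_apply]; exact hS0
  have e3 := congrArg (PowerSeries.coeff 3) hkey
  simp only [psComp, PowerSeries.coeff_mk] at e3
  simp only [Finset.sum_range_succ, Finset.sum_range_zero, pow_succ, pow_zero, one_mul,
    PowerSeries.coeff_mul, Finset.Nat.sum_antidiagonal_eq_sum_range_succ_mk,
    PowerSeries.coeff_one, h0, hS1, gSer1, gSer2, gSer3, coeff_gSer_zero] at e3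
  norm_num at e3
  linarith

lemma extract3 {S : PowerSeries ℚ} (hS0 : PowerSeries.constantCoeff S = 0)
    (hS1 : PowerSeries.coeff 1 S = -1) (hkey : psComp gSer S = gSer)
    (h2 : PowerSeries.coeff 2 S = 2 / 3) :
    PowerSeries.coeff 3 S = -4 / 9 := by
  have h0 : PowerSeries.coeff 0 S = 0 := by
    rw [PowerSeries.coeff_zero_eq_constantCoeff_apply]; exact hS0
  have e4 := congrArg (PowerSeries.coeff 4) hkey
  simp only [psComp, PowerSeries.coeff_mk] at e4
  simp only [Finset.sum_range_succ, Finset.sum_range_zero, pow_succ, pow_zero, one_mul,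
    PowerSeries.coeff_mul, Finset.Nat.sum_antidiagonal_eq_sum_range_succ_mk,
    PowerSeries.coeff_one, h0, hS1, h2, gSer1, gSer2, gSer3, gSer4, coeff_gSer_zero] at e4
  norm_num at e4
  linarith

lemma extract4 {S : PowerSeries ℚ} (hS0 : PowerSeries.constantCoeff S = 0)
    (hS1 : PowerSeries.coeff 1 S = -1) (hkey : psComp gSer S = gSer)
    (h2 : PowerSeries.coeff 2 S = 2 / 3) (h3 : PowerSeries.coeff 3 S = -4 / 9) :
    PowerSeries.coeff 4 S = 44 / 135 := by
  have h0 : PowerSeries.coeff 0 S = 0 := by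
    rw [PowerSeries.coeff_zero_eq_constantCoeff_apply]; exact hS0
  have e5 := congrArg (PowerSeries.coeff 5) hkey
  simp only [psComp, PowerSeries.coeff_mk] at e5
  simp only [Finset.sum_range_succ, Finset.sum_range_zero, pow_succ, pow_zero, one_mul,
    PowerSeries.coeff_mul, Finset.Nat.sum_antidiagonal_eq_sum_range_succ_mk,
    PowerSeries.coeff_one, h0, hS1, h2, h3, gSer1, gSer2, gSer3, gSer4, gSer5,
    coeff_gSer_zero] at e5
  norm_num at e5
  linarith

lemma eq_iff_key {S : PowerSeries ℚ} (hS : PowerSeries.constantCoeff S = 0) :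
    (1 + PowerSeries.X) * expNeg = (1 + S) * psComp expNeg S ↔ psComp gSer S = gSer := by
  rw [one_add_mul_psComp hS]
  unfold gSer
  exact eq_comm

lemma key_unique {S : PowerSeries ℚ} (hS0 : PowerSeries.constantCoeff S = 0)
    (hS1 : PowerSeries.coeff 1 S = -1) (hkey : psComp gSer S = gSer) : S = S₀ := by
  ext m
  induction m using Nat.strong_induction_on with
  | _ m ih =>
    match m, ih with
    | 0, _ =>
      rw [PowerSeries.coeff_zero_eq_constantCoeff_apply,
        PowerSeries.coeff_zero_eq_constantCoeff_apply, hS0, S₀_const]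
    | 1, _ => rw [hS1, S₀_one]
    | n + 2, ih =>
      have hA := lemA hS0 S₀_const (n := n + 2) (by omega)
        (fun i hi => ih i (by omega)) hS1
      rw [hkey, psComp_gSer_S₀, sub_self] at hA
      linarith


/-- There is a unique formal power series `S(z) = -z + O(z²)` satisfying
`(1+z)e^{-z} = (1+S(z))e^{-S(z)}`, and its initial coefficients are
`S(z) = -z + (2/3)z² - (4/9)z³ + (44/135)z⁴ + O(z⁵)`. -/
theorem conjugate_involution_exists_unique :
    (∃! S : PowerSeries ℚ,
        PowerSeries.constantCoeff S = 0 ∧ PowerSeries.coeff 1 S = -1 ∧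
          (1 + PowerSeries.X) * expNeg = (1 + S) * psComp expNeg S) ∧
      ∀ S : PowerSeries ℚ,
        PowerSeries.constantCoeff S = 0 → PowerSeries.coeff 1 S = -1 →
          (1 + PowerSeries.X) * expNeg = (1 + S) * psComp expNeg S →
            PowerSeries.coeff 2 S = 2 / 3 ∧ PowerSeries.coeff 3 S = -4 / 9 ∧
              PowerSeries.coeff 4 S = 44 / 135 := by
  constructor
  · refine ⟨S₀, ⟨S₀_const, S₀_one, ?_⟩, ?_⟩
    · exact (eq_iff_key S₀_const).mpr psComp_gSer_S₀
    · rintro T ⟨hT0, hT1, hTeq⟩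
      exact key_unique hT0 hT1 ((eq_iff_key hT0).mp hTeq)
  · intro S hS0 hS1 heq
    have hkey := (eq_iff_key hS0).mp heq
    have h2 := extract2 hS0 hS1 hkey
    have h3 := extract3 hS0 hS1 hkey h2
    exact ⟨h2, h3, extract4 hS0 hS1 hkey h2 h3⟩
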